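/- arXiv:1801.00339 — 2 statements merged into one kernel-verified Lean document; each statement's English description precedes it below -/
import Mathlib

section
/- Let H be a complex Hilbert space, I a countable index set, (e_n)_{n∈I} a Riesz sequence in H, and (f_n)_{n∈I} a sequence in H that is ℓ²-independent. Suppose there exist q ∈ (0,1) and a finite subset J ⊆ I such that ‖∑_{n∉J} a_n (e_n − f_n)‖² ≤ q · ‖∑_{n∈I} a_n e_n‖² for all finitely supported families of complex scalars (a_n)_{n∈I}. Then (f_n)_{n∈I} is also a Riesz sequence in H. -/
open MeasureTheory
open scoped ENNReal NNReal

/-- A family `e` indexed by `I` in a normed `ℂ`-module is a *Riesz sequence*: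
there are constants `0 < c ≤ C` with
`c·∑‖a n‖² ≤ ‖∑ a n • e n‖² ≤ C·∑‖a n‖²` for all finitely supported scalars. -/
def IsRieszSequence {H : Type*} [NormedAddCommGroup H] [Module ℂ H]
    {I : Type*} (e : I → H) : Prop :=
  ∃ c C : ℝ, 0 < c ∧ c ≤ C ∧ ∀ a : I →₀ ℂ,
    c * ∑ n ∈ a.support, ‖a n‖ ^ 2 ≤ ‖∑ n ∈ a.support, a n • e n‖ ^ 2 ∧
    ‖∑ n ∈ a.support, a n • e n‖ ^ 2 ≤ C * ∑ n ∈ a.support, ‖a n‖ ^ 2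

/-- A family `f` is *ℓ²-independent*: any square-summable family of coefficients whose
(unconditional) sum `∑ c n • f n` converges to `0` must vanish identically. -/
def IsL2Independent {H : Type*} [NormedAddCommGroup H] [Module ℂ H]
    {I : Type*} (f : I → H) : Prop :=
  ∀ c : I → ℂ, Summable (fun n => ‖c n‖ ^ 2) →
    HasSum (fun n => c n • f n) 0 → ∀ n, c n = 0

private lemma cs_smul {H : Type*} [NormedAddCommGroup H] [NormedSpace ℂ H] {I : Type*}
    (s : Finset I) (x : I → ℂ) (g : I → H) :
    ‖∑ n ∈ s, x n • g n‖ ≤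
      Real.sqrt (∑ n ∈ s, ‖x n‖ ^ 2) * Real.sqrt (∑ n ∈ s, ‖g n‖ ^ 2) := by
  calc ‖∑ n ∈ s, x n • g n‖ ≤ ∑ n ∈ s, ‖x n‖ * ‖g n‖ := by
        refine (norm_sum_le _ _).trans ?_
        exact Finset.sum_le_sum fun n _ => by rw [norm_smul]
    _ ≤ _ := Real.sum_mul_le_sqrt_mul_sqrt _ _ _

set_option maxHeartbeats 2000000 in
/-- Paley–Wiener type perturbation (Lemma on Riesz sequences): if `e` is a Riesz sequence,
`f` is ℓ²-independent, and outside a finite set `J` the difference `e − f` is dominated in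
the sense `‖∑_{n∉J} a n • (e n − f n)‖² ≤ q‖∑ a n • e n‖²` with `q ∈ (0,1)`,
then `f` is also a Riesz sequence. -/
theorem riesz_sequence_perturbation
    {H : Type*} [NormedAddCommGroup H] [InnerProductSpace ℂ H] [CompleteSpace H]
    {I : Type*} [Countable I] [DecidableEq I] (e f : I → H)
    (he : IsRieszSequence e) (hf : IsL2Independent f)
    (q : ℝ) (hq0 : 0 < q) (hq1 : q < 1) (J : Finset I)
    (hclose : ∀ a : I →₀ ℂ,
      ‖∑ n ∈ a.support \ J, a n • (e n - f n)‖ ^ 2 ≤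
        q * ‖∑ n ∈ a.support, a n • e n‖ ^ 2) :
    IsRieszSequence f := by
  classical
  obtain ⟨c, C, hc, hcC, hbd⟩ := he
  have hC : 0 < C := lt_of_lt_of_le hc hcC
  -- sum-of-squares nonnegativity
  have hSnn : ∀ (x : I → ℂ) (t : Finset I), (0:ℝ) ≤ ∑ n ∈ t, ‖x n‖ ^ 2 :=
    fun x t => Finset.sum_nonneg fun n _ => by positivity
  -- transfer the finsupp hypotheses to arbitrary finsets
  have key : ∀ (x : I → ℂ) (t : Finset I),
      (c * ∑ n ∈ t, ‖x n‖ ^ 2 ≤ ‖∑ n ∈ t, x n • e n‖ ^ 2) ∧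
      (‖∑ n ∈ t, x n • e n‖ ^ 2 ≤ C * ∑ n ∈ t, ‖x n‖ ^ 2) ∧
      (‖∑ n ∈ t \ J, x n • (e n - f n)‖ ^ 2 ≤ q * ‖∑ n ∈ t, x n • e n‖ ^ 2) := by
    intro x t
    set a : I →₀ ℂ := Finsupp.indicator t (fun n _ => x n) with ha
    have hsub : a.support ⊆ t := fun n hn => Finsupp.support_indicator_subset _ _ hn
    have hav : ∀ n, n ∉ a.support → a n = 0 := fun n hn => Finsupp.notMem_support_iff.mp hn
    have ham : ∀ n ∈ t, a n = x n := fun n hn => Finsupp.indicator_of_mem hn _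
    have h1 : ∑ n ∈ a.support, a n • e n = ∑ n ∈ t, x n • e n := by
      rw [Finset.sum_subset hsub (fun n _ hn => by rw [hav n hn, zero_smul])]
      exact Finset.sum_congr rfl fun n hn => by rw [ham n hn]
    have h2 : ∑ n ∈ a.support, ‖a n‖ ^ 2 = ∑ n ∈ t, ‖x n‖ ^ 2 := by
      rw [Finset.sum_subset hsub (fun n _ hn => by rw [hav n hn]; simp)]
      exact Finset.sum_congr rfl fun n hn => by rw [ham n hn]
    have h3 : ∑ n ∈ a.support \ J, a n • (e n - f n) = ∑ n ∈ t \ J, x n • (e n - f n) := by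
      rw [Finset.sum_subset (Finset.sdiff_subset_sdiff hsub (le_refl J))
        (fun n hn hn' => ?_)]
      · exact Finset.sum_congr rfl fun n hn => by
          rw [ham n (Finset.mem_sdiff.mp hn).1]
      · have hns : n ∉ a.support := fun hmem =>
          hn' (Finset.mem_sdiff.mpr ⟨hmem, (Finset.mem_sdiff.mp hn).2⟩)
        rw [hav n hns, zero_smul]
    obtain ⟨hl, hu⟩ := hbd a
    refine ⟨?_, ?_, ?_⟩
    · rw [← h1, ← h2]; exact hl
    · rw [← h1, ← h2]; exact hu
    · rw [← h1, ← h3]; exact hclose a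
  -- norm (non-squared) versions
  have he_lowN : ∀ (x : I → ℂ) (t : Finset I),
      Real.sqrt c * Real.sqrt (∑ n ∈ t, ‖x n‖ ^ 2) ≤ ‖∑ n ∈ t, x n • e n‖ := by
    intro x t
    have h := (key x t).1
    have := Real.sqrt_le_sqrt h
    rwa [Real.sqrt_mul hc.le, Real.sqrt_sq (norm_nonneg _)] at this
  have he_upN : ∀ (x : I → ℂ) (t : Finset I),
      ‖∑ n ∈ t, x n • e n‖ ≤ Real.sqrt C * Real.sqrt (∑ n ∈ t, ‖x n‖ ^ 2) := by
    intro x t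
    have h := (key x t).2.1
    have := Real.sqrt_le_sqrt h
    rwa [Real.sqrt_mul hC.le, Real.sqrt_sq (norm_nonneg _)] at this
  have hcloseN : ∀ (x : I → ℂ) (t : Finset I),
      ‖∑ n ∈ t \ J, x n • (e n - f n)‖ ≤ Real.sqrt q * ‖∑ n ∈ t, x n • e n‖ := by
    intro x t
    have h := (key x t).2.2
    have := Real.sqrt_le_sqrt h
    rwa [Real.sqrt_mul hq0.le, Real.sqrt_sq (norm_nonneg _),
      Real.sqrt_sq (norm_nonneg _)] at this
  -- constants
  set Mef : ℝ := Real.sqrt (∑ n ∈ J, ‖e n - f n‖ ^ 2) with hMef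
  set Kf : ℝ := Real.sqrt (∑ n ∈ J, ‖f n‖ ^ 2) with hKf
  set K : ℝ := Real.sqrt C * (1 + Real.sqrt q) + Mef with hK
  have hMef0 : 0 ≤ Mef := Real.sqrt_nonneg _
  have hKf0 : 0 ≤ Kf := Real.sqrt_nonneg _
  have hsq1 : Real.sqrt q < 1 := by
    rw [show (1:ℝ) = Real.sqrt 1 by simp]
    exact Real.sqrt_lt_sqrt hq0.le hq1
  have hK0 : 0 < K := by
    have h1 : 0 < Real.sqrt C := Real.sqrt_pos.mpr hC
    nlinarith [Real.sqrt_nonneg q]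
  set m0 : ℝ := (1 - Real.sqrt q) * Real.sqrt c with hm0def
  have hm0 : 0 < m0 := by
    have : 0 < Real.sqrt c := Real.sqrt_pos.mpr hc
    nlinarith
  -- upper bound for f on finsets
  have f_upN : ∀ (x : I → ℂ) (t : Finset I),
      ‖∑ n ∈ t, x n • f n‖ ≤ K * Real.sqrt (∑ n ∈ t, ‖x n‖ ^ 2) := by
    intro x t
    have hptws : ∀ n, x n • f n = x n • e n - x n • (e n - f n) := fun n => by
      rw [smul_sub]; abel
    have hsplit : ∑ n ∈ t, x n • (e n - f n)
        = ∑ n ∈ t ∩ J, x n • (e n - f n) + ∑ n ∈ t \ J, x n • (e n - f n) :=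
      (Finset.sum_inter_add_sum_sdiff t J _).symm
    have heq : ∑ n ∈ t, x n • f n
        = ∑ n ∈ t, x n • e n - ∑ n ∈ t \ J, x n • (e n - f n)
          - ∑ n ∈ t ∩ J, x n • (e n - f n) := by
      rw [Finset.sum_congr rfl fun n _ => hptws n, Finset.sum_sub_distrib, hsplit]
      abel
    rw [heq]
    have h1 : ‖∑ n ∈ t, x n • e n‖ ≤ Real.sqrt C * Real.sqrt (∑ n ∈ t, ‖x n‖ ^ 2) :=
      he_upN x t
    have h2 : ‖∑ n ∈ t \ J, x n • (e n - f n)‖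
        ≤ Real.sqrt q * (Real.sqrt C * Real.sqrt (∑ n ∈ t, ‖x n‖ ^ 2)) :=
      (hcloseN x t).trans (by
        exact mul_le_mul_of_nonneg_left h1 (Real.sqrt_nonneg q))
    have h3 : ‖∑ n ∈ t ∩ J, x n • (e n - f n)‖
        ≤ Real.sqrt (∑ n ∈ t, ‖x n‖ ^ 2) * Mef := by
      refine (cs_smul _ _ _).trans ?_
      have hxle : Real.sqrt (∑ n ∈ t ∩ J, ‖x n‖ ^ 2)
          ≤ Real.sqrt (∑ n ∈ t, ‖x n‖ ^ 2) :=
        Real.sqrt_le_sqrt (Finset.sum_le_sum_of_subset_of_nonneg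
          (Finset.inter_subset_left) (fun n _ _ => by positivity))
      have hgle : Real.sqrt (∑ n ∈ t ∩ J, ‖e n - f n‖ ^ 2) ≤ Mef :=
        Real.sqrt_le_sqrt (Finset.sum_le_sum_of_subset_of_nonneg
          (Finset.inter_subset_right) (fun n _ _ => by positivity))
      exact mul_le_mul hxle hgle (Real.sqrt_nonneg _) (Real.sqrt_nonneg _)
    calc ‖∑ n ∈ t, x n • e n - ∑ n ∈ t \ J, x n • (e n - f n)
            - ∑ n ∈ t ∩ J, x n • (e n - f n)‖
        ≤ ‖∑ n ∈ t, x n • e n‖ + ‖∑ n ∈ t \ J, x n • (e n - f n)‖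
          + ‖∑ n ∈ t ∩ J, x n • (e n - f n)‖ := by
          refine (norm_sub_le _ _).trans ?_
          gcongr
          exact norm_sub_le _ _
      _ ≤ Real.sqrt C * Real.sqrt (∑ n ∈ t, ‖x n‖ ^ 2)
          + Real.sqrt q * (Real.sqrt C * Real.sqrt (∑ n ∈ t, ‖x n‖ ^ 2))
          + Real.sqrt (∑ n ∈ t, ‖x n‖ ^ 2) * Mef := by gcongr
      _ = K * Real.sqrt (∑ n ∈ t, ‖x n‖ ^ 2) := by rw [hK]; ring
  -- lower bound for f on finsets disjoint from J
  have f_lowN : ∀ (x : I → ℂ) (t : Finset I), Disjoint t J →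
      m0 * Real.sqrt (∑ n ∈ t, ‖x n‖ ^ 2) ≤ ‖∑ n ∈ t, x n • f n‖ := by
    intro x t ht
    have hdiff : t \ J = t := Finset.sdiff_eq_self_of_disjoint ht
    have heq : ∑ n ∈ t, x n • f n
        = ∑ n ∈ t, x n • e n - ∑ n ∈ t \ J, x n • (e n - f n) := by
      rw [hdiff, ← Finset.sum_sub_distrib]
      exact Finset.sum_congr rfl fun n _ => by rw [smul_sub]; abel
    rw [heq]
    have h2 := hcloseN x t
    have h3 := he_lowN x t
    have h4 : ‖∑ n ∈ t, x n • e n‖ - ‖∑ n ∈ t \ J, x n • (e n - f n)‖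
        ≤ ‖∑ n ∈ t, x n • e n - ∑ n ∈ t \ J, x n • (e n - f n)‖ :=
      norm_sub_norm_le _ _
    have h5 : (1 - Real.sqrt q) * ‖∑ n ∈ t, x n • e n‖
        ≤ ‖∑ n ∈ t, x n • e n - ∑ n ∈ t \ J, x n • (e n - f n)‖ := by nlinarith
    calc m0 * Real.sqrt (∑ n ∈ t, ‖x n‖ ^ 2)
        = (1 - Real.sqrt q) * (Real.sqrt c * Real.sqrt (∑ n ∈ t, ‖x n‖ ^ 2)) := by
          rw [hm0def]; ring
      _ ≤ (1 - Real.sqrt q) * ‖∑ n ∈ t, x n • e n‖ := by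
          have : (0:ℝ) ≤ 1 - Real.sqrt q := by linarith
          exact mul_le_mul_of_nonneg_left h3 this
      _ ≤ _ := h5
  -- ℓ² facts
  haveI : Fact ((1:ℝ≥0∞) ≤ 2) := ⟨one_le_two⟩
  have hx2 : ∀ x : lp (fun _ : I => ℂ) 2, HasSum (fun n => ‖x n‖ ^ 2) (‖x‖ ^ 2) := by
    intro x
    have h := lp.hasSum_norm (p := 2) (E := fun _ : I => ℂ) (by norm_num) x
    simp only [ENNReal.toReal_ofNat] at h
    have h2 : ∀ y : ℝ, y ^ (2:ℝ) = y ^ 2 := fun y => by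
      rw [show (2:ℝ) = ((2:ℕ):ℝ) by norm_num, Real.rpow_natCast]
    simpa only [h2] using h
  have hsum_sq_le : ∀ (x : lp (fun _ : I => ℂ) 2) (t : Finset I),
      ∑ n ∈ t, ‖x n‖ ^ 2 ≤ ‖x‖ ^ 2 :=
    fun x t => sum_le_hasSum t (fun n _ => by positivity) (hx2 x)
  have hxnorm_sqrt : ∀ (x : lp (fun _ : I => ℂ) 2) (t : Finset I),
      Real.sqrt (∑ n ∈ t, ‖x n‖ ^ 2) ≤ ‖x‖ := by
    intro x t
    have := Real.sqrt_le_sqrt (hsum_sq_le x t)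
    rwa [Real.sqrt_sq (norm_nonneg _)] at this
  -- summability of ∑ x n • f n for x ∈ ℓ²
  have hsummable : ∀ x : lp (fun _ : I => ℂ) 2, Summable (fun n => x n • f n) := by
    intro x
    rw [summable_iff_vanishing_norm]
    intro ε hε
    have hδ : (0:ℝ) < (ε / K) ^ 2 := by positivity
    obtain ⟨s, hs⟩ := summable_iff_vanishing_norm.mp (hx2 x).summable _ hδ
    refine ⟨s, fun t ht => ?_⟩
    have h1 := hs t ht
    rw [Real.norm_eq_abs, abs_of_nonneg (hSnn x t)] at h1
    have h2 : Real.sqrt (∑ n ∈ t, ‖x n‖ ^ 2) < ε / K := by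
      have := Real.sqrt_lt_sqrt (hSnn x t) h1
      rwa [Real.sqrt_sq (by positivity)] at this
    calc ‖∑ n ∈ t, x n • f n‖ ≤ K * Real.sqrt (∑ n ∈ t, ‖x n‖ ^ 2) := f_upN x t
      _ < K * (ε / K) := by exact mul_lt_mul_of_pos_left h2 hK0
      _ = ε := by field_simp
  have hSf : ∀ x : lp (fun _ : I => ℂ) 2,
      HasSum (fun n => x n • f n) (∑' n, x n • f n) := fun x => (hsummable x).hasSum
  -- norm bounds for the sums
  have SfUB : ∀ (x : lp (fun _ : I => ℂ) 2) (w : H),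
      HasSum (fun n => x n • f n) w → ‖w‖ ≤ K * ‖x‖ := by
    intro x w hw
    have hn : Filter.Tendsto (fun t : Finset I => ‖∑ n ∈ t, x n • f n‖)
        Filter.atTop (nhds ‖w‖) := hw.norm
    refine le_of_tendsto hn (Filter.Eventually.of_forall fun t => ?_)
    exact (f_upN x t).trans (mul_le_mul_of_nonneg_left (hxnorm_sqrt x t) hK0.le)
  have SfLB : ∀ (x : lp (fun _ : I => ℂ) 2), (∀ n ∈ J, x n = 0) → ∀ w : H,
      HasSum (fun n => x n • f n) w → m0 * ‖x‖ ≤ ‖w‖ := by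
    intro x hxJ w hw
    have hn : Filter.Tendsto (fun t : Finset I => ‖∑ n ∈ t, x n • f n‖)
        Filter.atTop (nhds ‖w‖) := hw.norm
    have hl : Filter.Tendsto (fun t : Finset I => m0 * Real.sqrt (∑ n ∈ t, ‖x n‖ ^ 2))
        Filter.atTop (nhds (m0 * ‖x‖)) := by
      have h1 : Filter.Tendsto (fun t : Finset I => ∑ n ∈ t, ‖x n‖ ^ 2)
          Filter.atTop (nhds (‖x‖ ^ 2)) := hx2 x
      have h2 := h1.sqrt
      rw [Real.sqrt_sq (norm_nonneg _)] at h2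
      exact h2.const_mul m0
    refine le_of_tendsto_of_tendsto' hl hn fun t => ?_
    have hteq : ∑ n ∈ t \ J, x n • f n = ∑ n ∈ t, x n • f n :=
      Finset.sum_subset (Finset.sdiff_subset)
        (fun n hn hn' => by
          have : n ∈ J := by
            by_contra hnJ
            exact hn' (Finset.mem_sdiff.mpr ⟨hn, hnJ⟩)
          rw [hxJ n this, zero_smul])
    have hteq2 : ∑ n ∈ t \ J, ‖x n‖ ^ 2 = ∑ n ∈ t, ‖x n‖ ^ 2 :=
      Finset.sum_subset (Finset.sdiff_subset)
        (fun n hn hn' => by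
          have : n ∈ J := by
            by_contra hnJ
            exact hn' (Finset.mem_sdiff.mpr ⟨hn, hnJ⟩)
          rw [hxJ n this]; simp)
    rw [← hteq, ← hteq2]
    exact f_lowN x (t \ J) (Finset.sdiff_disjoint)
  -- the closed subspace V = {sums with coefficients vanishing on J}
  set V : Submodule ℂ H :=
    { carrier := {v | ∃ x : lp (fun _ : I => ℂ) 2,
        (∀ n ∈ J, x n = 0) ∧ HasSum (fun n => x n • f n) v}
      zero_mem' := ⟨0, by simp [lp.coeFn_zero], by
        simpa [lp.coeFn_zero] using hasSum_zero⟩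
      add_mem' := by
        rintro u v ⟨x, hxJ, hxs⟩ ⟨y, hyJ, hys⟩
        refine ⟨x + y, fun n hn => by simp [lp.coeFn_add, hxJ n hn, hyJ n hn], ?_⟩
        have h := hxs.add hys
        have hcongr : (fun n => (↑(x + y) : I → ℂ) n • f n)
            = fun n => (x n • f n) + (y n • f n) := by
          funext n
          rw [lp.coeFn_add, Pi.add_apply, add_smul]
        rw [hcongr]
        exact h
      smul_mem' := by
        rintro r v ⟨x, hxJ, hxs⟩
        refine ⟨r • x, fun n hn => by simp [lp.coeFn_smul, hxJ n hn], ?_⟩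
        have h := hxs.const_smul r
        have hcongr : (fun n => (↑(r • x) : I → ℂ) n • f n)
            = fun n => r • (x n • f n) := by
          funext n
          rw [lp.coeFn_smul, Pi.smul_apply, smul_assoc]
        rw [hcongr]
        exact h } with hV
  have hmemV_iff : ∀ v : H, v ∈ V ↔ ∃ x : lp (fun _ : I => ℂ) 2,
      (∀ n ∈ J, x n = 0) ∧ HasSum (fun n => x n • f n) v := fun v => Iff.rfl
  -- closedness of the coefficient subspace
  have hQclosed : IsClosed {x : lp (fun _ : I => ℂ) 2 | ∀ n ∈ J, x n = 0} := by
    have heq : {x : lp (fun _ : I => ℂ) 2 | ∀ n ∈ J, x n = 0}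
        = ⋂ n ∈ J, {x : lp (fun _ : I => ℂ) 2 | x n = 0} := by
      ext x; simp
    rw [heq]
    refine isClosed_biInter fun n _ => ?_
    have hcont : Continuous (fun x : lp (fun _ : I => ℂ) 2 => x n) := by
      refine LipschitzWith.continuous (K := 1) ?_
      refine LipschitzWith.of_dist_le_mul fun x y => ?_
      simp only [NNReal.coe_one, one_mul, dist_eq_norm]
      have h1 : x n - y n = (x - y) n := by rw [lp.coeFn_sub, Pi.sub_apply]
      rw [show ‖x n - y n‖ = ‖(x - y) n‖ by rw [h1]]
      exact lp.norm_apply_le_norm (by norm_num) (x - y) n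
    exact isClosed_eq hcont continuous_const
  haveI hQcomp : CompleteSpace {x : lp (fun _ : I => ℂ) 2 | ∀ n ∈ J, x n = 0} :=
    hQclosed.completeSpace_coe
  -- the synthesis map on the coefficient subspace
  set ψ : {x : lp (fun _ : I => ℂ) 2 | ∀ n ∈ J, x n = 0} → H :=
    fun x => ∑' n, (↑x : lp (fun _ : I => ℂ) 2) n • f n with hψ
  have hψsub : ∀ x y : {x : lp (fun _ : I => ℂ) 2 | ∀ n ∈ J, x n = 0},
      HasSum (fun n => ((↑x : lp (fun _ : I => ℂ) 2) - ↑y) n • f n) (ψ x - ψ y) := by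
    intro x y
    have h := (hSf ↑x).sub (hSf ↑y)
    have hcongr : (fun n => ((↑x : lp (fun _ : I => ℂ) 2) - ↑y) n • f n)
        = fun n => ((↑x : lp (fun _ : I => ℂ) 2) n • f n)
            - ((↑y : lp (fun _ : I => ℂ) 2) n • f n) := by
      funext n
      rw [lp.coeFn_sub, Pi.sub_apply, sub_smul]
    rw [hcongr]
    exact h
  have hψlip : LipschitzWith K.toNNReal ψ := by
    refine LipschitzWith.of_dist_le_mul fun x y => ?_
    rw [dist_eq_norm, Subtype.dist_eq, dist_eq_norm]
    have h := SfUB (↑x - ↑y) (ψ x - ψ y) (hψsub x y)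
    rw [Real.coe_toNNReal _ hK0.le]
    exact h
  have hψanti : AntilipschitzWith (m0⁻¹).toNNReal ψ := by
    refine AntilipschitzWith.of_le_mul_dist fun x y => ?_
    rw [dist_eq_norm, Subtype.dist_eq, dist_eq_norm]
    have hJ0 : ∀ n ∈ J, ((↑x : lp (fun _ : I => ℂ) 2) - ↑y) n = 0 := by
      intro n hn
      rw [lp.coeFn_sub, Pi.sub_apply, x.2 n hn, y.2 n hn, sub_zero]
    have h := SfLB (↑x - ↑y) hJ0 (ψ x - ψ y) (hψsub x y)
    rw [Real.coe_toNNReal _ (by positivity : (0:ℝ) ≤ m0⁻¹)]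
    calc ‖(↑x : lp (fun _ : I => ℂ) 2) - ↑y‖
        = m0⁻¹ * (m0 * ‖(↑x : lp (fun _ : I => ℂ) 2) - ↑y‖) := by
          field_simp
      _ ≤ m0⁻¹ * ‖ψ x - ψ y‖ := by
          exact mul_le_mul_of_nonneg_left h (by positivity)
  have hrange : (V : Set H) = Set.range ψ := by
    ext v
    constructor
    · rintro ⟨x, hxJ, hxs⟩
      exact ⟨⟨x, hxJ⟩, hxs.tsum_eq⟩
    · rintro ⟨x, rfl⟩
      exact ⟨↑x, x.2, hSf ↑x⟩
  have hVclosed : IsClosed (V : Set H) := by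
    rw [hrange]
    exact hψanti.isClosed_range hψlip.uniformContinuous
  haveI : IsClosed (V : Set H) := hVclosed
  -- the finite-dimensional quotient map
  set Y : EuclideanSpace ℂ {n // n ∈ J} → I → ℂ :=
    fun y n => if h : n ∈ J then y ⟨n, h⟩ else 0 with hY
  set g : EuclideanSpace ℂ {n // n ∈ J} →ₗ[ℂ] H ⧸ V :=
    { toFun := fun y => V.mkQ (∑ n ∈ J, Y y n • f n)
      map_add' := by
        intro y z
        have hpt : ∀ n ∈ J, Y (y + z) n • f n = Y y n • f n + Y z n • f n := by
          intro n hn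
          simp only [hY, dif_pos hn]
          rw [← add_smul]
          congr 1
        rw [Finset.sum_congr rfl hpt, Finset.sum_add_distrib, map_add V.mkQ]
      map_smul' := by
        intro r y
        have hpt : ∀ n ∈ J, Y (r • y) n • f n = r • (Y y n • f n) := by
          intro n hn
          simp only [hY, dif_pos hn]
          rw [smul_smul]
          congr 1
        simp only [RingHom.id_apply]
        rw [Finset.sum_congr rfl hpt, ← Finset.smul_sum, _root_.map_smul V.mkQ] } with hg
  have hker : LinearMap.ker g = ⊥ := by
    rw [LinearMap.ker_eq_bot']
    intro y hy
    have hy' : (∑ n ∈ J, Y y n • f n) ∈ V := by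
      rw [← Submodule.Quotient.mk_eq_zero]
      exact hy
    obtain ⟨x, hxJ, hxs⟩ := hy'
    set z : I → ℂ := fun n => Y y n - x n with hz
    have hsum1 : HasSum (fun n => Y y n • f n) (∑ n ∈ J, Y y n • f n) :=
      hasSum_sum_of_ne_finset_zero (fun n hn => by
        simp only [hY, dif_neg hn, zero_smul])
    have hzsum : HasSum (fun n => z n • f n) 0 := by
      have h := hsum1.sub hxs
      rw [sub_self] at h
      have hcongr : (fun n => z n • f n) = fun n => Y y n • f n - x n • f n := by
        funext n
        rw [hz, sub_smul]
      rw [hcongr]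
      exact h
    have hzsq : Summable (fun n => ‖z n‖ ^ 2) := by
      have hA : Summable (fun n => ‖x n‖ ^ 2) := (hx2 x).summable
      have hB : Summable (fun n => if n ∈ J then ‖z n‖ ^ 2 - ‖x n‖ ^ 2 else 0) :=
        summable_of_ne_finset_zero (s := J) (fun n hn => if_neg hn)
      refine (hA.add hB).congr fun n => ?_
      by_cases h : n ∈ J
      · simp only [if_pos h]; ring
      · simp only [if_neg h, add_zero, hz, hY, dif_neg h, zero_sub, norm_neg]
    have hz0 := hf z hzsq hzsum
    ext m
    have h1 : z ↑m = 0 := hz0 ↑m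
    have h2 : x ↑m = 0 := hxJ ↑m m.2
    have h3 : Y y ↑m = y m := by simp only [hY, dif_pos m.2]
    have : Y y ↑m = 0 := by
      have := h1
      rw [hz] at this
      simp only at this
      linear_combination (norm := module) this + h2
    rw [h3] at this
    exact this
  obtain ⟨γ, hγ0, hγ⟩ := g.exists_antilipschitzWith hker
  have hγR : (0:ℝ) < (γ:ℝ) := hγ0
  have hglow : ∀ y : EuclideanSpace ℂ {n // n ∈ J}, ‖y‖ ≤ (γ:ℝ) * ‖g y‖ := by
    intro y
    have h := hγ.le_mul_dist y 0
    simpa [dist_zero_right, map_zero] using h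
  -- final constants
  set R : ℝ := (1 + Kf * γ) / m0 with hR
  have hR0 : 0 < R := by
    have : (0:ℝ) < 1 + Kf * γ := by positivity
    positivity
  set cf : ℝ := (R ^ 2 + (γ:ℝ) ^ 2)⁻¹ with hcf
  have hD0 : (0:ℝ) < R ^ 2 + (γ:ℝ) ^ 2 := by positivity
  have hcf0 : 0 < cf := by positivity
  refine ⟨cf, K ^ 2 + cf, hcf0, by nlinarith, fun a => ?_⟩
  set t := a.support with hta
  set N : ℝ := ‖∑ n ∈ t, a n • f n‖ with hN
  have hN0 : 0 ≤ N := norm_nonneg _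
  set Sb : ℝ := ∑ n ∈ t \ J, ‖a n‖ ^ 2 with hSb
  set Sc : ℝ := ∑ n ∈ t ∩ J, ‖a n‖ ^ 2 with hSc
  have hsplit_sq : Sc + Sb = ∑ n ∈ t, ‖a n‖ ^ 2 :=
    Finset.sum_inter_add_sum_sdiff t J _
  have hsplitf : ∑ n ∈ t, a n • f n
      = ∑ n ∈ t ∩ J, a n • f n + ∑ n ∈ t \ J, a n • f n :=
    (Finset.sum_inter_add_sum_sdiff t J _).symm
  -- membership of the off-J part in V
  have hmem0 : Memℓp (fun n => if n ∈ J then 0 else a n) (2:ℝ≥0∞) := by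
    refine memℓp_gen ?_
    refine summable_of_ne_finset_zero (s := t) fun n hn => ?_
    have ha0 : a n = 0 := Finsupp.notMem_support_iff.mp hn
    have : (if n ∈ J then 0 else a n) = 0 := by
      by_cases h : n ∈ J <;> simp [h, ha0]
    rw [this]
    simp only [norm_zero]
    rw [Real.zero_rpow (by simp)]
  set x0 : lp (fun _ : I => ℂ) 2 := ⟨fun n => if n ∈ J then 0 else a n, hmem0⟩ with hx0
  have hx0app : ∀ n, x0 n = if n ∈ J then 0 else a n := fun n => rfl
  have hx0J : ∀ n ∈ J, x0 n = 0 := fun n hn => by rw [hx0app, if_pos hn]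
  have hx0sum : HasSum (fun n => x0 n • f n) (∑ n ∈ t \ J, a n • f n) := by
    have h0 : ∀ n ∉ t \ J, x0 n • f n = 0 := by
      intro n hn
      by_cases h : n ∈ J
      · rw [hx0app, if_pos h, zero_smul]
      · have hnt : n ∉ t := fun hmem => hn (Finset.mem_sdiff.mpr ⟨hmem, h⟩)
        rw [hx0app, if_neg h, Finsupp.notMem_support_iff.mp hnt, zero_smul]
    have h : HasSum (fun n => x0 n • f n) (∑ n ∈ t \ J, x0 n • f n) :=
      hasSum_sum_of_ne_finset_zero h0
    have heq2 : ∑ n ∈ t \ J, x0 n • f n = ∑ n ∈ t \ J, a n • f n :=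
      Finset.sum_congr rfl fun n hn => by
        rw [hx0app, if_neg (Finset.mem_sdiff.mp hn).2]
    rwa [heq2] at h
  have hmemV : (∑ n ∈ t \ J, a n • f n) ∈ V := ⟨x0, hx0J, hx0sum⟩
  -- the finite-dimensional quotient lower bound
  set y : EuclideanSpace ℂ {n // n ∈ J} := WithLp.toLp 2 (fun m => a ↑m) with hy
  have hstep1 : ∑ n ∈ J, Y y n • f n = ∑ n ∈ J, a n • f n :=
    Finset.sum_congr rfl fun n hn => by simp only [hY, dif_pos hn, hy, WithLp.ofLp_toLp]
  have hstep2 : ∑ n ∈ t ∩ J, a n • f n = ∑ n ∈ J, a n • f n :=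
    Finset.sum_subset (Finset.inter_subset_right) (fun n hn hn' => by
      have hnt : n ∉ t := fun h => hn' (Finset.mem_inter.mpr ⟨h, hn⟩)
      rw [Finsupp.notMem_support_iff.mp hnt, zero_smul])
  have hgy : g y = V.mkQ (∑ n ∈ t, a n • f n) := by
    have h1 : g y = V.mkQ (∑ n ∈ J, Y y n • f n) := rfl
    rw [h1, hstep1, ← hstep2, hsplitf, map_add]
    have h2 : V.mkQ (∑ n ∈ t \ J, a n • f n) = 0 := by
      rw [Submodule.mkQ_apply, Submodule.Quotient.mk_eq_zero]
      exact hmemV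
    rw [h2, add_zero]
  have hynorm : ‖y‖ = Real.sqrt Sc := by
    rw [EuclideanSpace.norm_eq]
    congr 1
    have h1 : ∑ m : {n // n ∈ J}, ‖y m‖ ^ 2 = ∑ n ∈ J, ‖a n‖ ^ 2 := by
      rw [hy]
      exact Finset.sum_coe_sort J (fun n => ‖a n‖ ^ 2)
    have h2 : Sc = ∑ n ∈ J, ‖a n‖ ^ 2 := by
      rw [hSc]
      refine Finset.sum_subset (Finset.inter_subset_right) (fun n hn hn' => ?_)
      have hnt : n ∉ t := fun h => hn' (Finset.mem_inter.mpr ⟨h, hn⟩)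
      rw [Finsupp.notMem_support_iff.mp hnt]
      simp
    rw [h1, h2]
  have hScN : Real.sqrt Sc ≤ (γ:ℝ) * N := by
    have h1 := hglow y
    rw [hynorm, hgy] at h1
    have h2 : ‖V.mkQ (∑ n ∈ t, a n • f n)‖ ≤ N := by
      rw [Submodule.mkQ_apply]
      exact Submodule.Quotient.norm_mk_le V _
    calc Real.sqrt Sc ≤ (γ:ℝ) * ‖V.mkQ (∑ n ∈ t, a n • f n)‖ := h1
      _ ≤ (γ:ℝ) * N := by exact mul_le_mul_of_nonneg_left h2 hγR.le
  -- the off-J lower bound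
  have hSbN : m0 * Real.sqrt Sb ≤ N + Kf * Real.sqrt Sc := by
    have h1 : ‖∑ n ∈ t \ J, a n • f n‖ ≤ N + ‖∑ n ∈ t ∩ J, a n • f n‖ := by
      have : ∑ n ∈ t \ J, a n • f n
          = ∑ n ∈ t, a n • f n - ∑ n ∈ t ∩ J, a n • f n := by
        rw [hsplitf]; abel
      rw [this]
      exact norm_sub_le _ _
    have h2 : ‖∑ n ∈ t ∩ J, a n • f n‖ ≤ Real.sqrt Sc * Kf := by
      refine (cs_smul _ _ _).trans ?_
      refine mul_le_mul_of_nonneg_left ?_ (Real.sqrt_nonneg _)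
      exact Real.sqrt_le_sqrt (Finset.sum_le_sum_of_subset_of_nonneg
        (Finset.inter_subset_right) (fun n _ _ => by positivity))
    have h3 : m0 * Real.sqrt Sb ≤ ‖∑ n ∈ t \ J, a n • f n‖ :=
      f_lowN (fun n => a n) (t \ J) (Finset.sdiff_disjoint)
    nlinarith [Real.sqrt_nonneg Sc]
  -- assemble
  have hSb0 : 0 ≤ Sb := hSnn _ _
  have hSc0 : 0 ≤ Sc := hSnn _ _
  have hRb : Real.sqrt Sb ≤ R * N := by
    rw [hR, div_mul_eq_mul_div, le_div_iff₀ hm0]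
    calc Real.sqrt Sb * m0 = m0 * Real.sqrt Sb := by ring
      _ ≤ N + Kf * Real.sqrt Sc := hSbN
      _ ≤ N + Kf * ((γ:ℝ) * N) := by
          exact add_le_add_right (mul_le_mul_of_nonneg_left hScN hKf0) N
      _ = (1 + Kf * γ) * N := by ring
  have hb2 : Sb ≤ R ^ 2 * N ^ 2 := by
    have h := pow_le_pow_left₀ (Real.sqrt_nonneg Sb) hRb 2
    rwa [Real.sq_sqrt hSb0, mul_pow] at h
  have hc2 : Sc ≤ (γ:ℝ) ^ 2 * N ^ 2 := by
    have h := pow_le_pow_left₀ (Real.sqrt_nonneg Sc) hScN 2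
    rwa [Real.sq_sqrt hSc0, mul_pow] at h
  constructor
  · -- lower bound
    have hS : ∑ n ∈ t, ‖a n‖ ^ 2 ≤ (R ^ 2 + (γ:ℝ) ^ 2) * N ^ 2 := by
      rw [← hsplit_sq]; nlinarith
    calc cf * ∑ n ∈ t, ‖a n‖ ^ 2 ≤ cf * ((R ^ 2 + (γ:ℝ) ^ 2) * N ^ 2) :=
          mul_le_mul_of_nonneg_left hS hcf0.le
      _ = N ^ 2 := by
          rw [hcf, ← mul_assoc, inv_mul_cancel₀ hD0.ne', one_mul]
  · -- upper bound
    have h := f_upN (fun n => a n) t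
    have h2 := pow_le_pow_left₀ (norm_nonneg _) h 2
    rw [mul_pow, Real.sq_sqrt (hSnn _ _)] at h2
    calc ‖∑ n ∈ t, a n • f n‖ ^ 2 ≤ K ^ 2 * ∑ n ∈ t, ‖a n‖ ^ 2 := h2
      _ ≤ (K ^ 2 + cf) * ∑ n ∈ t, ‖a n‖ ^ 2 := by nlinarith [hSnn (fun n => a n) t]
end

section
/- Let (S,σ) be a measure space, d ≥ 1, R > 0, let (F_n)_{n≥1} be an orthonormal family in the space L²(S,σ;ℂ^d) of square-integrable ℂ^d-valued functions, and let m : S → ℝ^d be measurable with |m(x)| ≤ R (Euclidean norm) for σ-a.e. x ∈ S. Then for every finitely supported family (u_j)_{j∈ℤ₀} of complex scalars: ∫_S |∑_{j∈ℤ₀} u_j · sgn(j) · (m(x)·F_{|j|}(x))|² dσ(x) ≤ R² · (∑_{j∈ℤ₀} |u_j|² − ∑_{j∈ℤ₀} u_j·conj(u_{−j})), where m(x)·F(x) denotes the sum ∑_{i=1}^d m_i(x)F_i(x) of the coordinatewise products. -/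
open MeasureTheory

/-- The index set `ℤ₀ = ℤ ∖ {0}`. -/
abbrev Z0 : Type := {j : ℤ // j ≠ 0}

/-- Negation `j ↦ -j` on `ℤ₀`. -/
def Z0.neg (j : Z0) : Z0 := ⟨-j.1, neg_ne_zero.mpr j.2⟩

/-- The absolute value `|j| ∈ ℕ⁺` of `j ∈ ℤ₀`. -/
def Z0.idx (j : Z0) : ℕ+ := ⟨j.1.natAbs, Int.natAbs_pos.mpr j.2⟩

/-- The sign of `j ∈ ℤ₀`: `1` if `j > 0` and `-1` if `j < 0`. -/
def Z0.sgn (j : Z0) : ℝ := if 0 < j.1 then 1 else -1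

lemma Z0.idx_eq_iff (j k : Z0) : j.idx = k.idx ↔ k = j ∨ k = j.neg := by
  constructor
  · intro h
    have h' : j.1.natAbs = k.1.natAbs := congrArg (fun n : ℕ+ => (n : ℕ)) h
    rcases Int.natAbs_eq_natAbs_iff.mp h' with h2 | h2
    · left; exact Subtype.ext h2.symm
    · right; exact Subtype.ext (by simp only [Z0.neg]; omega)
  · rintro (rfl | rfl)
    · rfl
    · exact PNat.eq (by simp [Z0.idx, Z0.neg])

lemma Z0.neg_ne (j : Z0) : j ≠ j.neg := by
  intro h
  have := congrArg Subtype.val h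
  simp only [Z0.neg] at this
  exact j.2 (by omega)

lemma Z0.sgn_mul_sgn_neg (j : Z0) : j.sgn * (Z0.neg j).sgn = -1 := by
  rcases lt_or_gt_of_ne j.2 with h | h
  · have h1 : ¬ (0:ℤ) < j.1 := not_lt_of_gt h
    have h2 : (0:ℤ) < -j.1 := by omega
    simp [Z0.sgn, Z0.neg, h1, h2]
    exact fun h3 => absurd h3 (by omega)
  · have h2 : ¬ (0:ℤ) < -j.1 := by omega
    simp [Z0.sgn, Z0.neg, h, h2]
    exact fun h3 => absurd h3 (by omega)

lemma Z0.norm_sgn (j : Z0) : ‖(j.sgn : ℂ)‖ = 1 := by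
  rcases lt_or_gt_of_ne j.2 with h | h
  · simp only [Z0.sgn, not_lt_of_gt h, if_neg]
    simp [not_lt_of_gt h]
  · simp [Z0.sgn, h]

lemma integrable_inner_of_mem2 {S : Type*} [MeasurableSpace S] {σ : Measure S}
    {E : Type*} [NormedAddCommGroup E] [InnerProductSpace ℂ E]
    {f g : S → E} (hf : MemLp f 2 σ) (hg : MemLp g 2 σ) :
    Integrable (fun x => (inner ℂ (f x) (g x) : ℂ)) σ := by
  have h := L2.integrable_inner (𝕜 := ℂ) (hf.toLp f) (hg.toLp g)
  refine h.congr ?_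
  filter_upwards [hf.coeFn_toLp, hg.coeFn_toLp] with x h1 h2
  rw [h1, h2]


/-- Abstract quasi-orthogonality lemma: if `(F_n)` is an orthonormal family in
`L²(S,σ;ℂ^d)` and `|m(x)| ≤ R` a.e., then for all finitely supported scalars `u`,
`∫_S |∑_j u_j·sgn(j)·(m(x)·F_{|j|}(x))|² dσ ≤ R²·(∑|u_j|² − ∑ u_j·conj(u_{−j}))`. -/
theorem quasi_orthogonality_dot_product
    {S : Type*} [MeasurableSpace S] (σ : Measure S)
    (d : ℕ) (hd : 1 ≤ d) (R : ℝ) (hR : 0 < R)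
    (F : ℕ+ → S → EuclideanSpace ℂ (Fin d))
    (hF2 : ∀ n, MemLp (F n) 2 σ)
    (hFon : ∀ j k : ℕ+,
      ∫ x, (inner ℂ (F j x) (F k x) : ℂ) ∂σ = if j = k then 1 else 0)
    (m : S → EuclideanSpace ℝ (Fin d)) (hm : Measurable m)
    (hmR : ∀ᵐ x ∂σ, ‖m x‖ ≤ R)
    (u : Z0 →₀ ℂ) :
    ∫ x, ‖∑ j ∈ u.support,
        u j * (Z0.sgn j : ℂ) * ∑ i, ((m x i : ℝ) : ℂ) * F j.idx x i‖ ^ 2 ∂σ ≤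
      R ^ 2 * ((∑ j ∈ u.support, ‖u j‖ ^ 2) -
        (∑ j ∈ u.support, u j * starRingEnd ℂ (u j.neg)).re) := by
  classical
  set K := u.support with hK
  set a : Z0 → ℂ := fun j => u j * (Z0.sgn j : ℂ) with ha
  set H : S → EuclideanSpace ℂ (Fin d) := fun x => ∑ j ∈ K, a j • F j.idx x with hHdef
  have hHmem : MemLp H 2 σ :=
    memLp_finset_sum K (fun j _ => ((hF2 j.idx).const_smul (a j)))
  -- pointwise identity: the integrand is |⟪mc x, H x⟫|²
  set mc : S → EuclideanSpace ℂ (Fin d) := fun x => WithLp.toLp 2 (fun i => ((m x i : ℝ) : ℂ)) with hmc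
  have hmcnorm : ∀ x, ‖mc x‖ = ‖m x‖ := by
    intro x
    rw [EuclideanSpace.norm_eq, EuclideanSpace.norm_eq]
    congr 1
    apply Finset.sum_congr rfl
    intro i _
    simp [hmc]
  have hG : ∀ x, (∑ j ∈ K, u j * (Z0.sgn j : ℂ) * ∑ i, ((m x i : ℝ) : ℂ) * F j.idx x i)
      = inner ℂ (mc x) (H x) := by
    intro x
    rw [PiLp.inner_apply]
    have hHx : ∀ i, H x i = ∑ j ∈ K, a j * F j.idx x i := by
      intro i
      simp only [hHdef]
      rw [WithLp.ofLp_sum, Finset.sum_apply]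
      simp [PiLp.smul_apply, smul_eq_mul]
    simp only [RCLike.inner_apply, hHx]
    simp only [hmc, Complex.conj_ofReal]
    simp only [Finset.mul_sum, Finset.sum_mul, ha]
    rw [Finset.sum_comm]
    exact Finset.sum_congr rfl fun j _ => Finset.sum_congr rfl fun i _ => by ring
  -- pointwise bound
  have hbound : ∀ᵐ x ∂σ, ‖(inner ℂ (mc x) (H x) : ℂ)‖^2 ≤ R^2 * ‖H x‖^2 := by
    filter_upwards [hmR] with x hx
    have h1 : ‖(inner ℂ (mc x) (H x) : ℂ)‖ ≤ ‖mc x‖ * ‖H x‖ := norm_inner_le_norm _ _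
    have h2 : ‖mc x‖ * ‖H x‖ ≤ R * ‖H x‖ := by
      rw [hmcnorm]; exact mul_le_mul_of_nonneg_right hx (norm_nonneg _)
    calc ‖(inner ℂ (mc x) (H x) : ℂ)‖^2 ≤ (R * ‖H x‖)^2 :=
          pow_le_pow_left₀ (norm_nonneg _) (h1.trans h2) 2
      _ = R^2 * ‖H x‖^2 := by ring
  have hHnormsq : Integrable (fun x => ‖H x‖^2) σ := hHmem.norm.integrable_sq
  have step1 : ∫ x, ‖(inner ℂ (mc x) (H x) : ℂ)‖^2 ∂σ ≤ ∫ x, R^2 * ‖H x‖^2 ∂σ := by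
    apply integral_mono_of_nonneg
    · filter_upwards with x; positivity
    · exact hHnormsq.const_mul _
    · exact hbound
  -- compute the integral of ‖H‖²
  have hinner : Integrable (fun x => (inner ℂ (H x) (H x) : ℂ)) σ :=
    integrable_inner_of_mem2 hHmem hHmem
  have hHsq_eq : ∫ x, ‖H x‖^2 ∂σ = (∫ x, (inner ℂ (H x) (H x) : ℂ) ∂σ).re := by
    have hpt : ∀ x, ‖H x‖^2 = RCLike.re (inner ℂ (H x) (H x) : ℂ) :=
      fun x => (inner_self_eq_norm_sq (𝕜 := ℂ) (H x)).symm
    calc ∫ x, ‖H x‖^2 ∂σ = ∫ x, RCLike.re (inner ℂ (H x) (H x) : ℂ) ∂σ := by simp_rw [hpt]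
      _ = RCLike.re (∫ x, (inner ℂ (H x) (H x) : ℂ) ∂σ) := integral_re hinner
      _ = (∫ x, (inner ℂ (H x) (H x) : ℂ) ∂σ).re := by rw [RCLike.re_to_complex]
  have hinner_exp : ∫ x, (inner ℂ (H x) (H x) : ℂ) ∂σ
      = ∑ j ∈ K, (starRingEnd ℂ (a j) * a j + starRingEnd ℂ (a j) * a (Z0.neg j)) := by
    have hpt : ∀ x, (inner ℂ (H x) (H x) : ℂ)
        = ∑ j ∈ K, ∑ k ∈ K,
            starRingEnd ℂ (a j) * a k * (inner ℂ (F j.idx x) (F k.idx x) : ℂ) := by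
      intro x
      simp only [hHdef]
      rw [sum_inner]
      refine Finset.sum_congr rfl fun j _ => ?_
      rw [inner_smul_left, inner_sum, Finset.mul_sum]
      refine Finset.sum_congr rfl fun k _ => ?_
      rw [inner_smul_right]
      ring
    simp_rw [hpt]
    rw [integral_finset_sum K (fun j _ => integrable_finset_sum K (fun k _ =>
      (integrable_inner_of_mem2 (hF2 j.idx) (hF2 k.idx)).const_mul _))]
    refine Finset.sum_congr rfl fun j hj => ?_
    rw [integral_finset_sum K (fun k _ =>
      (integrable_inner_of_mem2 (hF2 j.idx) (hF2 k.idx)).const_mul _)]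
    have hsum : ∀ k ∈ K, ∫ x, starRingEnd ℂ (a j) * a k * (inner ℂ (F j.idx x) (F k.idx x) : ℂ) ∂σ
        = if k ∈ ({j, Z0.neg j} : Finset Z0) then starRingEnd ℂ (a j) * a k else 0 := by
      intro k _
      rw [integral_const_mul, hFon]
      by_cases h : j.idx = k.idx
      · rw [if_pos h, mul_one, if_pos]
        simpa [Finset.mem_insert, Finset.mem_singleton] using (Z0.idx_eq_iff j k).mp h
      · rw [if_neg h, mul_zero, if_neg]
        intro hk
        apply h
        rcases Finset.mem_insert.mp hk with rfl | hk
        · rfl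
        · rw [Finset.mem_singleton] at hk; subst hk
          exact (Z0.idx_eq_iff j _).mpr (Or.inr rfl)
    rw [Finset.sum_congr rfl hsum, Finset.sum_ite_mem]
    have hext : ∑ k ∈ K ∩ ({j, Z0.neg j} : Finset Z0), starRingEnd ℂ (a j) * a k
        = ∑ k ∈ ({j, Z0.neg j} : Finset Z0), starRingEnd ℂ (a j) * a k := by
      apply Finset.sum_subset Finset.inter_subset_right
      intro k _ hk
      have hkK : k ∉ K := fun h => hk (Finset.mem_inter.mpr ⟨h, ‹k ∈ _›⟩)
      have : u k = 0 := Finsupp.notMem_support_iff.mp hkK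
      simp [ha, this]
    rw [hext, Finset.sum_pair (Z0.neg_ne j)]
  -- compute the real part of the sum
  have hre : (∑ j ∈ K, (starRingEnd ℂ (a j) * a j + starRingEnd ℂ (a j) * a (Z0.neg j))).re
      = (∑ j ∈ K, ‖u j‖^2) - (∑ j ∈ K, u j * starRingEnd ℂ (u (Z0.neg j))).re := by
    rw [Complex.re_sum, Complex.re_sum, ← Finset.sum_sub_distrib]
    refine Finset.sum_congr rfl fun j hj => ?_
    have e1 : starRingEnd ℂ (a j) * a j = (‖a j‖^2 : ℝ) := by
      rw [RCLike.conj_mul]; norm_cast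
    have e2 : ‖a j‖ = ‖u j‖ := by
      rw [ha]; simp only [norm_mul, Z0.norm_sgn, mul_one]
    have e3 : starRingEnd ℂ (a j) * a (Z0.neg j) = - (starRingEnd ℂ (u j) * u (Z0.neg j)) := by
      simp only [ha, map_mul, Complex.conj_ofReal]
      have : ((Z0.sgn j : ℝ) : ℂ) * ((Z0.sgn (Z0.neg j) : ℝ) : ℂ) = -1 := by
        rw [← Complex.ofReal_mul, Z0.sgn_mul_sgn_neg]; norm_num
      calc starRingEnd ℂ (u j) * (Z0.sgn j : ℂ) * (u (Z0.neg j) * (Z0.sgn (Z0.neg j) : ℂ))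
          = starRingEnd ℂ (u j) * u (Z0.neg j) *
              (((Z0.sgn j : ℝ) : ℂ) * ((Z0.sgn (Z0.neg j) : ℝ) : ℂ)) := by ring
        _ = - (starRingEnd ℂ (u j) * u (Z0.neg j)) := by rw [this]; ring
    have e4 : (starRingEnd ℂ (u j) * u (Z0.neg j)).re
        = (u j * starRingEnd ℂ (u (Z0.neg j))).re := by
      have : starRingEnd ℂ (u j) * u (Z0.neg j)
          = starRingEnd ℂ (u j * starRingEnd ℂ (u (Z0.neg j))) := by
        rw [map_mul, RingHomInvPair.comp_apply_eq]
      rw [this, Complex.conj_re]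
    rw [Complex.add_re, e1, Complex.ofReal_re, e2, e3, Complex.neg_re, e4]
    ring
  -- combine
  calc ∫ x, ‖∑ j ∈ K, u j * (Z0.sgn j : ℂ) * ∑ i, ((m x i : ℝ) : ℂ) * F j.idx x i‖ ^ 2 ∂σ
      = ∫ x, ‖(inner ℂ (mc x) (H x) : ℂ)‖^2 ∂σ := by
        apply integral_congr_ae; filter_upwards with x; rw [hG x]
    _ ≤ ∫ x, R^2 * ‖H x‖^2 ∂σ := step1
    _ = R^2 * ∫ x, ‖H x‖^2 ∂σ := by rw [integral_const_mul]
    _ = R^2 * ((∑ j ∈ K, ‖u j‖^2) - (∑ j ∈ K, u j * starRingEnd ℂ (u (Z0.neg j))).re) := by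
        rw [hHsq_eq, hinner_exp, hre]
    _ = R ^ 2 * ((∑ j ∈ u.support, ‖u j‖ ^ 2) -
        (∑ j ∈ u.support, u j * starRingEnd ℂ (u j.neg)).re) := rfl
end
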